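/- Let p > 2 and let 𝒫 be a finite family of partition–weight pairs on a countable set A. Then the envelope norm generated by 𝒫 is equivalent on X(𝒫) to ‖·‖_𝒫: there exists a constant C ≥ 1 such that ‖x‖_𝒫 ≤ |||x||| ≤ C‖x‖_𝒫 for all x ∈ X(𝒫). -/

import Mathlib

open scoped ENNReal
open MeasureTheory Filter

noncomputable section

variable {α : Type*}

/-- `P` is a partition of the type `α`: a collection of pairwise disjoint
nonempty subsets of `α` whose union is all of `α`. -/
def IsPartition (P : Set (Set α)) : Prop :=
  (∀ N ∈ P, N.Nonempty) ∧ P.PairwiseDisjoint id ∧ ⋃₀ P = Set.univ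

/-- A weight function takes values in `(0,1]`. -/
def IsWeight (W : α → ℝ) : Prop := ∀ a, W a ∈ Set.Ioc (0 : ℝ) 1

/-- `‖x‖_{P,W} = (Σ_{N∈P} (Σ_{j∈N} x_j² w_j²)^{p/2})^{1/p}`, valued in `[0,∞]`. -/
def pwNorm (p : ℝ) (P : Set (Set α)) (W : α → ℝ) (x : α → ℝ) : ℝ≥0∞ :=
  (∑' N : P, (∑' j : N.1, ENNReal.ofReal ((x j.1) ^ 2 * (W j.1) ^ 2)) ^ (p / 2)) ^ (1 / p)

/-- A partition–weight pair on `α`. -/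
abbrev PWPair (α : Type*) := Set (Set α) × (α → ℝ)

/-- Every member of the family is a genuine partition–weight pair. -/
def IsPWFamily (𝒞 : Set (PWPair α)) : Prop :=
  ∀ PW ∈ 𝒞, IsPartition PW.1 ∧ IsWeight PW.2

/-- `‖x‖_𝒞 = sup_{(P,W) ∈ 𝒞} ‖x‖_{P,W}`. -/
def famNorm (p : ℝ) (𝒞 : Set (PWPair α)) (x : α → ℝ) : ℝ≥0∞ :=
  ⨆ PW ∈ 𝒞, pwNorm p PW.1 PW.2 x

/-- The block of the partition `Q` containing `b` (for a genuine partition this is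
the unique element of `Q` containing `b`). -/
def blockOf (Q : Set (Set α)) (b : α) : Set α := ⋃₀ {q ∈ Q | b ∈ q}

/-- The partition `P(Q,T)` obtained from a partition `Q` and a choice `T` of a
partition–weight pair for each block of `Q`. -/
def envPartition (Q : Set (Set α)) (T : Set α → PWPair α) : Set (Set α) :=
  {K | K.Nonempty ∧ ∃ q ∈ Q, ∃ s ∈ (T q).1, K = q ∩ s}

/-- The weight `W(Q,T)`: on the block `q` of `Q` it is the weight chosen by `T q`. -/
def envWeight (Q : Set (Set α)) (T : Set α → PWPair α) : α → ℝ :=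
  fun b => (T (blockOf Q b)).2 b

/-- A family of partition–weight pairs satisfies the envelope property if it is
closed under the operation `(Q, T) ↦ (P(Q,T), W(Q,T))`. -/
def EnvelopeProp (𝒞 : Set (PWPair α)) : Prop :=
  ∀ Q : Set (Set α), IsPartition Q → ∀ T : Set α → PWPair α, (∀ q ∈ Q, T q ∈ 𝒞) →
    (envPartition Q T, envWeight Q T) ∈ 𝒞

/-- The family `𝒞̃` of all pairs `(P(Q,T), W(Q,T))`. -/
def envFam (𝒞 : Set (PWPair α)) : Set (PWPair α) :=
  {PW | ∃ Q T, IsPartition Q ∧ (∀ q ∈ Q, T q ∈ 𝒞) ∧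
    PW = (envPartition Q T, envWeight Q T)}

/-- The envelope norm generated by `𝒞`. -/
def envNorm (p : ℝ) (𝒞 : Set (PWPair α)) (x : α → ℝ) : ℝ≥0∞ := famNorm p (envFam 𝒞) x

lemma tsum_rpow_le_rpow_tsum' {ι : Type*} (f : ι → ℝ≥0∞) {r : ℝ} (hr : 1 ≤ r) :
    ∑' i, f i ^ r ≤ (∑' i, f i) ^ r := by
  have hr0 : (0:ℝ) < r := by linarith
  set S := ∑' i, f i with hS
  rcases eq_or_ne S ⊤ with htop | htop
  · rw [htop, ENNReal.top_rpow_of_pos hr0]; exact le_top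
  rcases eq_or_ne S 0 with h0 | h0
  · have hf : ∀ i, f i = 0 := fun i =>
      le_antisymm (h0 ▸ ENNReal.le_tsum i) zero_le
    simp [hf, ENNReal.zero_rpow_of_pos hr0, h0]
  have key : ∀ i, f i ^ r ≤ S ^ (r - 1) * f i := by
    intro i
    have hfS : f i ≤ S := ENNReal.le_tsum i
    rcases eq_or_ne (f i) 0 with hfi | hfi
    · simp [hfi, ENNReal.zero_rpow_of_pos hr0]
    · have hfit : f i ≠ ⊤ := ne_top_of_le_ne_top htop hfS
      have h1 : f i ^ r = f i ^ (r - 1) * f i :=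
        calc f i ^ r = f i ^ ((r-1)+(1:ℝ)) := by norm_num
          _ = f i ^ (r-1) * f i ^ (1:ℝ) := ENNReal.rpow_add _ _ hfi hfit
          _ = f i ^ (r-1) * f i := by rw [ENNReal.rpow_one]
      rw [h1]
      exact mul_le_mul_left (ENNReal.rpow_le_rpow hfS (by linarith)) _
  calc ∑' i, f i ^ r ≤ ∑' i, S ^ (r-1) * f i := ENNReal.tsum_le_tsum key
    _ = S ^ (r-1) * S := by rw [ENNReal.tsum_mul_left]
    _ = S ^ r :=
        calc S ^ (r-1) * S = S ^ (r-1) * S ^ (1:ℝ) := by rw [ENNReal.rpow_one]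
          _ = S ^ ((r-1)+(1:ℝ)) := (ENNReal.rpow_add _ _ h0 htop).symm
          _ = S ^ r := by norm_num

lemma blockOf_eq' {Q : Set (Set α)} (hQ : (∀ N ∈ Q, N.Nonempty) ∧ Q.PairwiseDisjoint id ∧ ⋃₀ Q = Set.univ) {q : Set α} (hq : q ∈ Q)
    {b : α} (hb : b ∈ q) : (⋃₀ {q' ∈ Q | b ∈ q'} : Set α) = q := by
  have hset : {q' ∈ Q | b ∈ q'} = {q} := by
    ext q'
    simp only [Set.mem_setOf_eq, Set.mem_singleton_iff]
    constructor
    · rintro ⟨hq', hbq'⟩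
      by_contra hne
      exact Set.disjoint_left.1 (hQ.2.1 hq' hq hne) hbq' hb
    · rintro rfl; exact ⟨hq, hb⟩
  rw [hset, Set.sUnion_singleton]

lemma blockOf_eq {Q : Set (Set α)} (hQ : IsPartition Q) {q : Set α} (hq : q ∈ Q)
    {b : α} (hb : b ∈ q) : blockOf Q b = q :=
  blockOf_eq' hQ hq hb

/-- Key upper bound: the `p`-th power of the `pwNorm` of an envelope pair is bounded by the
sum over the family of the `p`-th powers of the `pwNorm`s. -/
lemma env_pw_le {A : Type*} (p : ℝ) (hp : 2 < p) (𝒞 : Set (PWPair A)) (hfin : 𝒞.Finite)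
    (Q : Set (Set A)) (T : Set A → PWPair A) (hQ : IsPartition Q) (hT : ∀ q ∈ Q, T q ∈ 𝒞)
    (x : A → ℝ) :
    (∑' K : envPartition Q T,
        (∑' j : K.1, ENNReal.ofReal ((x j.1) ^ 2 * (envWeight Q T j.1) ^ 2)) ^ (p / 2))
      ≤ ∑ c ∈ hfin.toFinset,
          ∑' s : c.1, (∑' j : s.1, ENNReal.ofReal ((x j.1) ^ 2 * (c.2 j.1) ^ 2)) ^ (p / 2) := by
  classical
  have hr : (1:ℝ) ≤ p / 2 := by linarith
  set a : PWPair A → A → ℝ≥0∞ := fun c j => ENNReal.ofReal ((x j) ^ 2 * (c.2 j) ^ 2) with ha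
  have hmem : ∀ K : ↥(envPartition Q T),
      K.1.Nonempty ∧ ∃ q ∈ Q, ∃ s ∈ (T q).1, K.1 = q ∩ s := fun K => K.2
  set g : ((q : ↥Q) × ↥((T q.1).1)) → ℝ≥0∞ :=
    fun z => (∑' j : ↥(z.1.1 ∩ z.2.1), a (T z.1.1) j.1) ^ (p/2) with hg
  set f : ↥(envPartition Q T) → ((q : ↥Q) × ↥((T q.1).1)) := fun K =>
    ⟨⟨(hmem K).2.choose, (hmem K).2.choose_spec.1⟩,
     ⟨(hmem K).2.choose_spec.2.choose, (hmem K).2.choose_spec.2.choose_spec.1⟩⟩ with hf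
  have hKeq : ∀ K : ↥(envPartition Q T), K.1 = (f K).1.1 ∩ (f K).2.1 :=
    fun K => (hmem K).2.choose_spec.2.choose_spec.2
  have finj : Function.Injective f := by
    intro K K' h
    apply Subtype.ext
    rw [hKeq K, hKeq K', h]
  have hterm : ∀ K : ↥(envPartition Q T),
      (∑' j : K.1, ENNReal.ofReal ((x j.1) ^ 2 * (envWeight Q T j.1) ^ 2)) ^ (p/2) = g (f K) := by
    intro K
    have hq : (f K).1.1 ∈ Q := (f K).1.2
    have hK := hKeq K
    have h1 : (∑' j : K.1, ENNReal.ofReal ((x j.1) ^ 2 * (envWeight Q T j.1) ^ 2))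
        = ∑' j : K.1, a (T (f K).1.1) j.1 := by
      refine tsum_congr fun j => ?_
      have hj : (j : A) ∈ (f K).1.1 := ((Set.ext_iff.1 hK j.1).1 j.2).1
      simp only [ha, envWeight, blockOf_eq hQ hq hj]
    rw [hg, h1]
    congr 1
    rw [hK]
  calc ∑' K : envPartition Q T,
        (∑' j : K.1, ENNReal.ofReal ((x j.1) ^ 2 * (envWeight Q T j.1) ^ 2)) ^ (p / 2)
      = ∑' K, g (f K) := tsum_congr hterm
    _ ≤ ∑' z, g z := ENNReal.tsum_comp_le_tsum_of_injective finj g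
    _ = ∑' q : ↥Q, ∑' s : ↥((T q.1).1), g ⟨q, s⟩ := ENNReal.tsum_sigma' g
    _ = ∑' q : ↥Q, ∑ c ∈ hfin.toFinset,
          if T q.1 = c then ∑' s : ↥c.1, (∑' j : ↥(q.1 ∩ s.1), a c j.1) ^ (p/2) else 0 := by
        refine tsum_congr fun q => ?_
        rw [Finset.sum_ite_eq, if_pos (hfin.mem_toFinset.2 (hT q.1 q.2))]
    _ = ∑ c ∈ hfin.toFinset, ∑' q : ↥Q,
          if T q.1 = c then ∑' s : ↥c.1, (∑' j : ↥(q.1 ∩ s.1), a c j.1) ^ (p/2) else 0 :=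
        Summable.tsum_finsetSum fun _ _ => ENNReal.summable
    _ ≤ ∑ c ∈ hfin.toFinset,
          ∑' s : c.1, (∑' j : s.1, ENNReal.ofReal ((x j.1) ^ 2 * (c.2 j.1) ^ 2)) ^ (p / 2) := by
        refine Finset.sum_le_sum fun c _ => ?_
        calc (∑' q : ↥Q, if T q.1 = c then
                ∑' s : ↥c.1, (∑' j : ↥(q.1 ∩ s.1), a c j.1) ^ (p/2) else 0)
            ≤ ∑' q : ↥Q, ∑' s : ↥c.1, (∑' j : ↥(q.1 ∩ s.1), a c j.1) ^ (p/2) := by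
              refine ENNReal.tsum_le_tsum fun q => ?_
              split_ifs with h
              · exact le_rfl
              · exact zero_le
          _ = ∑' s : ↥c.1, ∑' q : ↥Q, (∑' j : ↥(q.1 ∩ s.1), a c j.1) ^ (p/2) :=
              ENNReal.tsum_comm
          _ ≤ ∑' s : ↥c.1, (∑' j : ↥s.1, a c j.1) ^ (p/2) := by
              refine ENNReal.tsum_le_tsum fun s => ?_
              calc ∑' q : ↥Q, (∑' j : ↥(q.1 ∩ s.1), a c j.1) ^ (p/2)
                  ≤ (∑' q : ↥Q, ∑' j : ↥(q.1 ∩ s.1), a c j.1) ^ (p/2) :=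
                    tsum_rpow_le_rpow_tsum' _ hr
                _ ≤ (∑' j : ↥s.1, a c j.1) ^ (p/2) := by
                    refine ENNReal.rpow_le_rpow ?_ (by linarith)
                    have hsig : ∑' q : ↥Q, ∑' j : ↥(q.1 ∩ s.1), a c j.1
                        = ∑' z : (q : ↥Q) × ↥(q.1 ∩ s.1), a c z.2.1 :=
                      (ENNReal.tsum_sigma'
                        (fun z : (q : ↥Q) × ↥(q.1 ∩ s.1) => a c z.2.1)).symm
                    rw [hsig]
                    have hinj : Function.Injective
                        (fun z : (q : ↥Q) × ↥(q.1 ∩ s.1) => (⟨z.2.1, z.2.2.2⟩ : ↥s.1)) := by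
                      rintro ⟨⟨q1, hq1⟩, b1, hb1⟩ ⟨⟨q2, hq2⟩, b2, hb2⟩ h
                      simp only [Subtype.mk.injEq] at h
                      subst h
                      have hqq : q1 = q2 := by
                        by_contra hne
                        exact Set.disjoint_left.1 (hQ.2.1 hq1 hq2 hne) hb1.1 hb2.1
                      subst hqq
                      rfl
                    exact ENNReal.tsum_comp_le_tsum_of_injective hinj (fun j => a c j.1)
          _ = ∑' s : c.1, (∑' j : s.1, ENNReal.ofReal ((x j.1) ^ 2 * (c.2 j.1) ^ 2)) ^ (p / 2) :=
              rfl

/-- For `p > 2` and a finite family `𝒞` of partition–weight pairs on a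
countable set, the envelope norm generated by `𝒞` is equivalent to `‖·‖_𝒞` on `X(𝒞)`:
there is `C ≥ 1` with `‖x‖_𝒞 ≤ |||x||| ≤ C ‖x‖_𝒞` for every `x ∈ X(𝒞)`. -/
theorem statement6 {A : Type*} [Countable A] (p : ℝ) (hp : 2 < p)
    (𝒞 : Set (PWPair A)) (h𝒞 : IsPWFamily 𝒞) (hfin : 𝒞.Finite) :
    ∃ C : ℝ, 1 ≤ C ∧ ∀ x : A → ℝ, famNorm p 𝒞 x < ⊤ →
      famNorm p 𝒞 x ≤ envNorm p 𝒞 x ∧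
      envNorm p 𝒞 x ≤ ENNReal.ofReal C * famNorm p 𝒞 x := by
  classical
  have hp0 : (0:ℝ) < p := by linarith
  set n := hfin.toFinset.card with hn
  refine ⟨max 1 n, le_max_left _ _, fun x _ => ⟨?_, ?_⟩⟩
  · -- lower bound
    refine iSup₂_le fun PW hPW => ?_
    rcases isEmpty_or_nonempty A with hA | hA
    · -- A empty: pwNorm is 0
      have hPempty : IsEmpty ↥PW.1 := by
        constructor
        rintro ⟨N, hN⟩
        obtain ⟨b, -⟩ := (h𝒞 PW hPW).1.1 N hN
        exact IsEmpty.false b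
      have : pwNorm p PW.1 PW.2 x = 0 := by
        rw [pwNorm, tsum_empty, ENNReal.zero_rpow_of_pos (by positivity)]
      rw [this]
      exact zero_le
    · -- A nonempty: PW itself is in the envelope family
      have hmem : PW ∈ envFam 𝒞 := by
        refine ⟨{Set.univ}, fun _ => PW, ?_, ?_, ?_⟩
        · refine ⟨?_, ?_, ?_⟩
          · rintro N rfl
            exact Set.univ_nonempty
          · exact Set.pairwiseDisjoint_singleton _ _
          · simp
        · rintro q rfl
          exact hPW
        · have h1 : envPartition {Set.univ} (fun _ => PW) = PW.1 := by
            ext K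
            simp only [envPartition, Set.mem_setOf_eq, Set.mem_singleton_iff]
            constructor
            · rintro ⟨-, q, rfl, s, hs, rfl⟩
              rwa [Set.univ_inter]
            · intro hK
              exact ⟨(h𝒞 PW hPW).1.1 K hK, Set.univ, rfl, K, hK, (Set.univ_inter K).symm⟩
          have h2 : envWeight {Set.univ} (fun _ => PW) = PW.2 := rfl
          rw [h1, h2]
      exact le_iSup₂ (f := fun PW (_ : PW ∈ envFam 𝒞) => pwNorm p PW.1 PW.2 x) PW hmem
  · -- upper bound
    refine iSup₂_le fun PW hPW => ?_
    obtain ⟨Q, T, hQ, hT, rfl⟩ := hPW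
    have key := env_pw_le p hp 𝒞 hfin Q T hQ hT x
    have hSc : ∀ c ∈ hfin.toFinset,
        (∑' s : c.1, (∑' j : s.1, ENNReal.ofReal ((x j.1) ^ 2 * (c.2 j.1) ^ 2)) ^ (p / 2))
          ≤ (famNorm p 𝒞 x) ^ p := by
      intro c hc
      have h1 : (∑' s : c.1, (∑' j : s.1,
            ENNReal.ofReal ((x j.1) ^ 2 * (c.2 j.1) ^ 2)) ^ (p / 2))
          = (pwNorm p c.1 c.2 x) ^ p := by
        rw [pwNorm, ← ENNReal.rpow_mul, one_div_mul_cancel hp0.ne', ENNReal.rpow_one]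
      rw [h1]
      refine ENNReal.rpow_le_rpow ?_ hp0.le
      exact le_iSup₂ (f := fun PW (_ : PW ∈ 𝒞) => pwNorm p PW.1 PW.2 x) c
        (hfin.mem_toFinset.1 hc)
    have hsum : (∑' K : envPartition Q T,
          (∑' j : K.1, ENNReal.ofReal ((x j.1) ^ 2 * (envWeight Q T j.1) ^ 2)) ^ (p / 2))
        ≤ (n : ℝ≥0∞) * (famNorm p 𝒞 x) ^ p := by
      calc _ ≤ ∑ c ∈ hfin.toFinset,
            ∑' s : c.1, (∑' j : s.1, ENNReal.ofReal ((x j.1) ^ 2 * (c.2 j.1) ^ 2)) ^ (p / 2) :=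
          key
        _ ≤ ∑ _c ∈ hfin.toFinset, (famNorm p 𝒞 x) ^ p := Finset.sum_le_sum hSc
        _ = (n : ℝ≥0∞) * (famNorm p 𝒞 x) ^ p := by
            rw [Finset.sum_const, nsmul_eq_mul, hn]
    calc pwNorm p (envPartition Q T, envWeight Q T).1 (envPartition Q T, envWeight Q T).2 x
        = (∑' K : envPartition Q T,
            (∑' j : K.1, ENNReal.ofReal ((x j.1) ^ 2 * (envWeight Q T j.1) ^ 2)) ^ (p / 2))
            ^ (1 / p) := rfl
      _ ≤ ((n : ℝ≥0∞) * (famNorm p 𝒞 x) ^ p) ^ (1 / p) :=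
          ENNReal.rpow_le_rpow hsum (by positivity)
      _ = (n : ℝ≥0∞) ^ (1/p) * ((famNorm p 𝒞 x) ^ p) ^ (1/p) :=
          ENNReal.mul_rpow_of_nonneg _ _ (by positivity)
      _ = (n : ℝ≥0∞) ^ (1/p) * famNorm p 𝒞 x := by
          rw [← ENNReal.rpow_mul, mul_one_div_cancel hp0.ne', ENNReal.rpow_one]
      _ ≤ ENNReal.ofReal (max 1 (n:ℝ)) * famNorm p 𝒞 x := by
          have hnle : ((n:ℝ≥0∞)) ^ (1/p) ≤ ENNReal.ofReal (max 1 (n:ℝ)) := by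
            rcases Nat.eq_zero_or_pos n with h | h
            · rw [h]
              simp only [Nat.cast_zero,
                ENNReal.zero_rpow_of_pos (by positivity : (0:ℝ) < 1/p)]
              exact zero_le
            · have h1 : ((n:ℝ≥0∞)) ^ (1/p) ≤ ((n:ℝ≥0∞)) ^ (1:ℝ) :=
                ENNReal.rpow_le_rpow_of_exponent_le (by exact_mod_cast h)
                  (by rw [div_le_one hp0]; linarith)
              have h2 : ((n:ℝ≥0∞)) ≤ ENNReal.ofReal (max 1 (n:ℝ)) := by
                rw [← ENNReal.ofReal_natCast n]
                exact ENNReal.ofReal_le_ofReal (le_max_right _ _)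
              exact h1.trans (by rw [ENNReal.rpow_one]; exact h2)
          exact mul_le_mul_left hnle _
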